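/- Synchronizations on disjoint node pairs commute on Stochastic Reo automata: ∂_{a,b}∂_{c,d}(A, r, t) = ∂_{c,d}∂_{a,b}(A, r, t) when a,b,c,d are distinct nodes of Σ. -/
import Mathlib


/-- A guard in disjunctive normal form consists of conjunctions of literals;
a single such conjunction (clause) is given by its positive and negative nodes. -/
structure Clause (N : Type) where
  pos : Finset N
  neg : Finset N

/-- Semantics of a conjunction of literals, as the set of satisfying atoms
(truth assignments) of the free Boolean algebra over `N`. -/
def Clause.sem {N : Type} (g : Clause N) : Set (N → Bool) :=
  {v | (∀ x ∈ g.pos, v x = true) ∧ (∀ x ∈ g.neg, v x = false)}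

/-- `g∖_{ab}`: delete all occurrences of literals over `a` and `b` from `g`. -/
def Clause.del {N : Type} [DecidableEq N] (g : Clause N) (a b : N) : Clause N :=
  ⟨(g.pos.erase a).erase b, (g.neg.erase a).erase b⟩

/-- Transition relations of a (normalized) Reo automaton, whose guard labels
are conjunctions of literals. -/
abbrev CTransRel (N Q : Type) := Q → Clause N → Finset N → Q → Prop

/-- The synchronization `∂_{a,b}` of a normalized Reo automaton: keep the
transitions with `g ≰ ¬a∧¬b` and `a ∈ f ⟺ b ∈ f`, deleting `a,b` from the
guard and the firing set. -/
def syncRel {N Q : Type} [DecidableEq N] (δ : CTransRel N Q) (a b : N) :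
    CTransRel N Q :=
  fun q g' f' q' => ∃ g f, δ q g f q' ∧
    ¬ (Clause.sem g ⊆ Clause.sem ⟨∅, {a, b}⟩) ∧
    (a ∈ f ↔ b ∈ f) ∧
    g' = g.del a b ∧ f' = (f.erase a).erase b

/-- Delay 3-tuples `(I, O, r)` of a Stochastic Reo automaton. -/
abbrev DelayTuple (N : Type) := Finset N × Finset N × ℝ

/-- Rate functions `t : δ → 2^Θ`, presented on all potential transitions. -/
abbrev RateFun (N Q : Type) := Q → Clause N → Finset N → Q → Set (DelayTuple N)

/-- `sync(A,B) = A ∪ B` if `A ∩ B ≠ ∅`, and `A` otherwise. -/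
def syncNodes {N : Type} [DecidableEq N] (A B : Finset N) : Finset N :=
  if (A ∩ B).Nonempty then A ∪ B else A

/-- The rate function of `∂_{a,b}(A,r,t)`: each surviving transition gets
`{(sync(A',{a,b}), sync(B',{a,b}), rate) : (A',B',rate) ∈ t(original)}`. -/
def syncRateFun {N Q : Type} [DecidableEq N] (δ : CTransRel N Q)
    (t : RateFun N Q) (a b : N) : RateFun N Q :=
  fun q g' f' q' =>
    {θ' | ∃ g f θ, δ q g f q' ∧
      ¬ (Clause.sem g ⊆ Clause.sem ⟨∅, {a, b}⟩) ∧ (a ∈ f ↔ b ∈ f) ∧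
      g' = g.del a b ∧ f' = (f.erase a).erase b ∧
      θ ∈ t q g f q' ∧
      θ' = (syncNodes θ.1 {a, b}, syncNodes θ.2.1 {a, b}, θ.2.2)}

/-! ### Auxiliary lemmas -/

lemma sem_subset_iff {N : Type} [DecidableEq N] (g : Clause N) (a b : N) :
    Clause.sem g ⊆ Clause.sem ⟨∅, {a, b}⟩ ↔
      (∃ x, x ∈ g.pos ∧ x ∈ g.neg) ∨ (a ∈ g.neg ∧ b ∈ g.neg) := by
  constructor
  · intro h
    by_contra hC
    push_neg at hC
    obtain ⟨hdisj, hnab⟩ := hC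
    obtain ⟨e, heab, hen⟩ : ∃ e, (e = a ∨ e = b) ∧ e ∉ g.neg := by
      by_cases ha : a ∈ g.neg
      · exact ⟨b, Or.inr rfl, hnab ha⟩
      · exact ⟨a, Or.inl rfl, ha⟩
    set v : N → Bool := fun x => decide (x ∈ g.pos ∨ x = e) with hv
    have hvsem : v ∈ Clause.sem g := by
      constructor
      · intro x hx; simp [hv, hx]
      · intro x hx
        have hxp : x ∉ g.pos := fun hp => hdisj x hp hx
        have hxe : x ≠ e := fun he => hen (he ▸ hx)
        simp [hv, hxp, hxe]
    have := (h hvsem).2 e (by rcases heab with h|h <;> simp [h])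
    simp [hv] at this
  · rintro (⟨x, hxp, hxn⟩ | ⟨ha, hb⟩) v hv
    · exact absurd (hv.1 x hxp) (by simp [hv.2 x hxn])
    · refine ⟨by simp, ?_⟩
      intro x hx
      rcases Finset.mem_insert.1 hx with h|h
      · exact h ▸ hv.2 a ha
      · exact (Finset.mem_singleton.1 h) ▸ hv.2 b hb

lemma del_comm {N : Type} [DecidableEq N] (g : Clause N) (a b c d : N) :
    (g.del c d).del a b = (g.del a b).del c d := by
  simp only [Clause.del]
  congr 1 <;> (ext x; simp only [Finset.mem_erase]; tauto)

lemma erase4_comm {N : Type} [DecidableEq N] (f : Finset N) (a b c d : N) :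
    (((f.erase c).erase d).erase a).erase b =
      (((f.erase a).erase b).erase c).erase d := by
  ext x; simp only [Finset.mem_erase]; tauto

lemma sem_del_subset_iff {N : Type} [DecidableEq N] (g : Clause N) (a b c d : N)
    (hac : a ≠ c) (had : a ≠ d) (hbc : b ≠ c) (hbd : b ≠ d)
    (h : ¬ Clause.sem g ⊆ Clause.sem ⟨∅, {c, d}⟩) :
    (Clause.sem (g.del c d) ⊆ Clause.sem ⟨∅, {a, b}⟩ ↔
      Clause.sem g ⊆ Clause.sem ⟨∅, {a, b}⟩) := by
  rw [sem_subset_iff, sem_subset_iff] at *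
  push_neg at h
  obtain ⟨hdisj, _⟩ := h
  simp only [Clause.del, Finset.mem_erase]
  constructor
  · rintro (⟨x, ⟨_, _, hxp⟩, _, _, hxn⟩ | ⟨⟨_, _, ha⟩, ⟨_, _, hb⟩⟩)
    · exact absurd hxn (hdisj x hxp)
    · exact Or.inr ⟨ha, hb⟩
  · rintro (⟨x, hxp, hxn⟩ | ⟨ha, hb⟩)
    · exact absurd hxn (hdisj x hxp)
    · exact Or.inr ⟨⟨had, hac, ha⟩, ⟨hbd, hbc, hb⟩⟩

lemma syncNodes_comm {N : Type} [DecidableEq N] (A B C : Finset N) (h : B ∩ C = ∅) :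
    syncNodes (syncNodes A B) C = syncNodes (syncNodes A C) B := by
  have h1 : (A ∪ B) ∩ C = A ∩ C := by
    rw [Finset.union_inter_distrib_right, h, Finset.union_empty]
  have h2 : (A ∪ C) ∩ B = A ∩ B := by
    rw [Finset.union_inter_distrib_right, Finset.inter_comm C B, h, Finset.union_empty]
  by_cases hB : (A ∩ B).Nonempty <;> by_cases hC : (A ∩ C).Nonempty <;>
    simp [syncNodes, hB, hC, h1, h2] <;> ac_rfl

lemma syncRel_le {N Q : Type} [DecidableEq N] (δ : CTransRel N Q) (a b c d : N)
    (hac : a ≠ c) (had : a ≠ d) (hbc : b ≠ c) (hbd : b ≠ d)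
    (q : Q) (g'' : Clause N) (f'' : Finset N) (q' : Q)
    (h : syncRel (syncRel δ c d) a b q g'' f'' q') :
    syncRel (syncRel δ a b) c d q g'' f'' q' := by
  obtain ⟨g', f', ⟨g, f, hδ, hgcd, hfcd, hg', hf'⟩, hg'ab, hf'ab, hg'', hf''⟩ := h
  subst hg' hf' hg'' hf''
  have hgab : ¬ Clause.sem g ⊆ Clause.sem ⟨∅, {a, b}⟩ :=
    fun h => hg'ab ((sem_del_subset_iff g a b c d hac had hbc hbd hgcd).mpr h)
  have hfab : a ∈ f ↔ b ∈ f := by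
    simpa [Finset.mem_erase, hac, had, hbc, hbd] using hf'ab
  refine ⟨g.del a b, (f.erase a).erase b, ⟨g, f, hδ, hgab, hfab, rfl, rfl⟩, ?_, ?_,
    del_comm g a b c d, erase4_comm f a b c d⟩
  · exact fun h => hgcd
      ((sem_del_subset_iff g c d a b hac.symm hbc.symm had.symm hbd.symm hgab).mp h)
  · simp [Finset.mem_erase, Ne.symm hac, Ne.symm had, Ne.symm hbc, Ne.symm hbd, hfcd]

lemma syncRateFun_le {N Q : Type} [DecidableEq N] (δ : CTransRel N Q)
    (t : RateFun N Q) (a b c d : N)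
    (hab : a ≠ b) (hac : a ≠ c) (had : a ≠ d)
    (hbc : b ≠ c) (hbd : b ≠ d) (hcd : c ≠ d)
    (q : Q) (g'' : Clause N) (f'' : Finset N) (q' : Q) :
    syncRateFun (syncRel δ c d) (syncRateFun δ t c d) a b q g'' f'' q' ⊆
      syncRateFun (syncRel δ a b) (syncRateFun δ t a b) c d q g'' f'' q' := by
  rintro θ'' ⟨g', f', θ', hrel, hg'ab, hf'ab, hg'', hf'',
    ⟨g, f, θ, hδ, hgcd, hfcd, hg', hf', hθt, hθ'⟩, hθ''⟩
  subst hg' hf' hg'' hf'' hθ' hθ''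
  have hgab : ¬ Clause.sem g ⊆ Clause.sem ⟨∅, {a, b}⟩ :=
    fun h => hg'ab ((sem_del_subset_iff g a b c d hac had hbc hbd hgcd).mpr h)
  have hfab : a ∈ f ↔ b ∈ f := by
    simpa [Finset.mem_erase, hac, had, hbc, hbd] using hf'ab
  have hgcd' : ¬ Clause.sem (g.del a b) ⊆ Clause.sem ⟨∅, {c, d}⟩ :=
    fun h => hgcd
      ((sem_del_subset_iff g c d a b hac.symm hbc.symm had.symm hbd.symm hgab).mp h)
  have hfcd' : c ∈ (f.erase a).erase b ↔ d ∈ (f.erase a).erase b := by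
    simp [Finset.mem_erase, Ne.symm hac, Ne.symm had, Ne.symm hbc, Ne.symm hbd, hfcd]
  have hdisj : ({a, b} : Finset N) ∩ {c, d} = ∅ := by
    ext x
    simp only [Finset.mem_inter, Finset.mem_insert, Finset.mem_singleton,
      Finset.notMem_empty, iff_false]
    rintro ⟨(rfl | rfl), (rfl | rfl)⟩ <;> simp_all
  refine ⟨g.del a b, (f.erase a).erase b,
    (syncNodes θ.1 {a, b}, syncNodes θ.2.1 {a, b}, θ.2.2),
    ⟨g, f, hδ, hgab, hfab, rfl, rfl⟩, hgcd', hfcd',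
    del_comm g a b c d, erase4_comm f a b c d,
    ⟨g, f, θ, hδ, hgab, hfab, rfl, rfl, hθt, rfl⟩, ?_⟩
  simp only [Prod.mk.injEq]
  exact ⟨syncNodes_comm θ.1 {c, d} {a, b} (by rw [Finset.inter_comm]; exact hdisj),
    syncNodes_comm θ.2.1 {c, d} {a, b} (by rw [Finset.inter_comm]; exact hdisj), trivial⟩

/-- Synchronizations on disjoint node pairs commute on Stochastic Reo automata:
`∂_{a,b}∂_{c,d}(A,r,t) = ∂_{c,d}∂_{a,b}(A,r,t)` for distinct nodes `a,b,c,d`: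
the underlying automata, restricted alphabets (on which the arrival-rate
function `r` lives), and rate functions `t` agree. -/
theorem stmt_15 {N Q : Type} [DecidableEq N] (Sig : Finset N)
    (δ : CTransRel N Q) (r : N → ℝ) (t : RateFun N Q)
    (a b c d : N) (haS : a ∈ Sig) (hbS : b ∈ Sig) (hcS : c ∈ Sig) (hdS : d ∈ Sig)
    (hab : a ≠ b) (hac : a ≠ c) (had : a ≠ d)
    (hbc : b ≠ c) (hbd : b ≠ d) (hcd : c ≠ d) :
    syncRel (syncRel δ c d) a b = syncRel (syncRel δ a b) c d ∧
    (Sig \ {c, d}) \ {a, b} = (Sig \ {a, b}) \ {c, d} ∧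
    syncRateFun (syncRel δ c d) (syncRateFun δ t c d) a b =
      syncRateFun (syncRel δ a b) (syncRateFun δ t a b) c d := by
  refine ⟨?_, ?_, ?_⟩
  · funext q g f q'
    exact propext ⟨syncRel_le δ a b c d hac had hbc hbd q g f q',
      syncRel_le δ c d a b hac.symm hbc.symm had.symm hbd.symm q g f q'⟩
  · ext x
    simp only [Finset.mem_sdiff, Finset.mem_insert, Finset.mem_singleton]
    tauto
  · funext q g f q'
    exact Set.Subset.antisymm
      (syncRateFun_le δ t a b c d hab hac had hbc hbd hcd q g f q')
      (syncRateFun_le δ t c d a b hcd hac.symm hbc.symm had.symm hbd.symm hab q g f q')
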